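/- arXiv:1904.07102 — 3 statements merged into one kernel-verified Lean document; each statement's English description precedes it below -/
import Mathlib

section
/- Let K be a field, A, B ∈ M_m(K) and A', B' ∈ M_{m'}(K), and suppose the characteristic polynomials of A·B and A'·B' are coprime in K[λ]. Then the K-linear map on pairs of m×m' matrices sending (C, D) to (A·D − C·A', B·C − D·B') is a linear isomorphism of M_{m×m'}(K) ⊕ M_{m×m'}(K) onto itself. -/
open Polynomial

lemma aeval_intertwine {K : Type*} [Field K] {m m' : ℕ}
    (X : Matrix (Fin m) (Fin m) K) (Y : Matrix (Fin m') (Fin m') K)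
    (C : Matrix (Fin m) (Fin m') K) (h : X * C = C * Y) (p : K[X]) :
    (aeval X p) * C = C * (aeval Y p) := by
  induction p using Polynomial.induction_on with
  | C a => simp [Algebra.algebraMap_eq_smul_one, Matrix.smul_mul, Matrix.mul_smul]
  | add p q hp hq => simp [map_add, Matrix.add_mul, Matrix.mul_add, hp, hq]
  | monomial n a hp =>
      simp only [pow_succ, ← mul_assoc, map_mul, aeval_X] at hp ⊢
      rw [Matrix.mul_assoc _ X C, h, ← Matrix.mul_assoc, hp, Matrix.mul_assoc]

lemma sylvester_zero {K : Type*} [Field K] {m m' : ℕ}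
    (X : Matrix (Fin m) (Fin m) K) (Y : Matrix (Fin m') (Fin m') K)
    (hcop : IsCoprime X.charpoly Y.charpoly)
    (C : Matrix (Fin m) (Fin m') K) (h : X * C = C * Y) : C = 0 := by
  obtain ⟨u, v, huv⟩ := hcop
  have hCpX : C * aeval Y X.charpoly = 0 := by
    rw [← aeval_intertwine X Y C h, Matrix.aeval_self_charpoly, Matrix.zero_mul]
  have h1 : (aeval Y) (u * X.charpoly + v * Y.charpoly) = 1 := by
    rw [huv]; simp
  calc C = C * (aeval Y) (u * X.charpoly + v * Y.charpoly) := by rw [h1, Matrix.mul_one]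
    _ = 0 := by
        simp only [map_add, map_mul, Matrix.aeval_self_charpoly, mul_zero, add_zero,
          Matrix.mul_add]
        rw [show aeval Y u * aeval Y X.charpoly = aeval Y X.charpoly * aeval Y u by
          rw [← map_mul, ← map_mul, mul_comm], ← Matrix.mul_assoc, hCpX]
        simp

lemma aeval_mul_of_mul_zero {K : Type*} [Field K] {m m' : ℕ}
    (X : Matrix (Fin m) (Fin m) K) (M : Matrix (Fin m) (Fin m') K)
    (h : X * M = 0) (p : K[X]) :
    (aeval X p) * M = p.coeff 0 • M := by
  induction p using Polynomial.induction_on with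
  | C a => simp [Algebra.algebraMap_eq_smul_one, Matrix.smul_mul]
  | add p q hp hq => simp [map_add, Matrix.add_mul, hp, hq, add_smul]
  | monomial n a hp =>
      simp only [map_mul, aeval_X, aeval_C, pow_succ, coeff_mul_X, coeff_C_mul]
      rw [Matrix.mul_assoc, Matrix.mul_assoc, h, Matrix.mul_zero, Matrix.mul_zero]
      simp [coeff_X_pow]

lemma mul_aeval_of_mul_zero {K : Type*} [Field K] {m m' : ℕ}
    (Y : Matrix (Fin m') (Fin m') K) (M : Matrix (Fin m) (Fin m') K)
    (h : M * Y = 0) (p : K[X]) :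
    M * (aeval Y p) = p.coeff 0 • M := by
  induction p using Polynomial.induction_on with
  | C a => simp [Algebra.algebraMap_eq_smul_one, Matrix.mul_smul]
  | add p q hp hq => simp [map_add, Matrix.mul_add, hp, hq, add_smul]
  | monomial n a hp =>
      have hz : M * Y ^ (n + 1) = 0 := by
        rw [pow_succ', ← Matrix.mul_assoc, h, Matrix.zero_mul]
      rw [map_mul, map_pow, aeval_X, aeval_C, Algebra.algebraMap_eq_smul_one,
        smul_mul_assoc, one_mul, Matrix.mul_smul, hz, smul_zero]
      simp [coeff_X_pow]

theorem sylvester_pair_equiv (K : Type*) [Field K] (m m' : ℕ)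
    (A B : Matrix (Fin m) (Fin m) K) (A' B' : Matrix (Fin m') (Fin m') K)
    (hcop : IsCoprime (A * B).charpoly (A' * B').charpoly) :
    ∃ e : (Matrix (Fin m) (Fin m') K × Matrix (Fin m) (Fin m') K) ≃ₗ[K]
          (Matrix (Fin m) (Fin m') K × Matrix (Fin m) (Fin m') K),
      ∀ C D : Matrix (Fin m) (Fin m') K,
        e (C, D) = (A * D - C * A', B * C - D * B') := by
  let f : (Matrix (Fin m) (Fin m') K × Matrix (Fin m) (Fin m') K) →ₗ[K]
      (Matrix (Fin m) (Fin m') K × Matrix (Fin m) (Fin m') K) :=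
    { toFun := fun p => (A * p.2 - p.1 * A', B * p.1 - p.2 * B'),
      map_add' := by
        intro p q
        simp only [Prod.fst_add, Prod.snd_add, Matrix.mul_add, Matrix.add_mul, Prod.mk_add_mk,
          Prod.mk.injEq]
        constructor <;> abel
      map_smul' := by
        intro c p
        simp [Matrix.mul_smul, Matrix.smul_mul, smul_sub] }
  have hinj : Function.Injective f := by
    rw [← LinearMap.ker_eq_bot, LinearMap.ker_eq_bot']
    rintro ⟨C, D⟩ hCD
    simp only [f, LinearMap.coe_mk, AddHom.coe_mk, Prod.mk_eq_zero, sub_eq_zero] at hCD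
    obtain ⟨h1, h2⟩ := hCD
    -- C = 0 via the standard Sylvester argument
    have hC : (A * B) * C = C * (A' * B') := by
      rw [Matrix.mul_assoc, h2, ← Matrix.mul_assoc, h1, Matrix.mul_assoc]
    have hC0 : C = 0 := sylvester_zero _ _ hcop C hC
    -- now A*D = 0 and D*B' = 0
    have hAD : A * D = 0 := by rw [h1, hC0, Matrix.zero_mul]
    have hDB' : D * B' = 0 := by rw [← h2, hC0, Matrix.mul_zero]
    -- hence (B*A)*D = 0 and D*(B'*A') = 0
    have hBAD : (B * A) * D = 0 := by rw [Matrix.mul_assoc, hAD, Matrix.mul_zero]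
    have hDBA' : D * (B' * A') = 0 := by rw [← Matrix.mul_assoc, hDB', Matrix.zero_mul]
    -- Cayley–Hamilton kills D up to constant coefficients
    have key1 : (B * A).charpoly.coeff 0 • D = 0 := by
      rw [← aeval_mul_of_mul_zero (B * A) D hBAD, Matrix.aeval_self_charpoly, Matrix.zero_mul]
    have key2 : (B' * A').charpoly.coeff 0 • D = 0 := by
      rw [← mul_aeval_of_mul_zero (B' * A') D hDBA', Matrix.aeval_self_charpoly, Matrix.mul_zero]
    -- constant coefficients agree with those of A*B, A'*B'
    have hc1 : (B * A).charpoly.coeff 0 = (A * B).charpoly.coeff 0 := by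
      have e1 := Matrix.det_eq_sign_charpoly_coeff (B * A)
      have e2 := Matrix.det_eq_sign_charpoly_coeff (A * B)
      have hdet : (B * A).det = (A * B).det := by
        rw [Matrix.det_mul, Matrix.det_mul, mul_comm]
      rw [e1, e2] at hdet
      have hne : ((-1 : K) ^ Fintype.card (Fin m)) ≠ 0 := pow_ne_zero _ (by norm_num)
      exact mul_left_cancel₀ hne hdet
    have hc2 : (B' * A').charpoly.coeff 0 = (A' * B').charpoly.coeff 0 := by
      have e1 := Matrix.det_eq_sign_charpoly_coeff (B' * A')
      have e2 := Matrix.det_eq_sign_charpoly_coeff (A' * B')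
      have hdet : (B' * A').det = (A' * B').det := by
        rw [Matrix.det_mul, Matrix.det_mul, mul_comm]
      rw [e1, e2] at hdet
      have hne : ((-1 : K) ^ Fintype.card (Fin m')) ≠ 0 := pow_ne_zero _ (by norm_num)
      exact mul_left_cancel₀ hne hdet
    -- the constant coefficients cannot both vanish
    have hnotboth : (A * B).charpoly.coeff 0 ≠ 0 ∨ (A' * B').charpoly.coeff 0 ≠ 0 := by
      by_contra hcon
      push_neg at hcon
      obtain ⟨hz1, hz2⟩ := hcon
      obtain ⟨u, v, huv⟩ := hcop
      have := congrArg (Polynomial.eval 0) huv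
      rw [coeff_zero_eq_eval_zero] at hz1 hz2
      simp [hz1, hz2] at this
    have hD0 : D = 0 := by
      rcases hnotboth with h | h
      · exact (smul_eq_zero.mp (hc1 ▸ key1)).resolve_left h
      · exact (smul_eq_zero.mp (hc2 ▸ key2)).resolve_left h
    simp [hC0, hD0]
  have hbij : Function.Bijective f :=
    ⟨hinj, (LinearMap.injective_iff_surjective).mp hinj⟩
  exact ⟨LinearEquiv.ofBijective f hbij, fun C D => rfl⟩
end

section
/- Let t₀ < 0 be a real number, and let u₁, …, u_p and v₁, …, v_q be real sequences satisfying u_i − u_{i+1} > t₀ for 1 ≤ i ≤ p−1 and v_i − v_{i+1} > t₀ for 1 ≤ i ≤ q−1. Then there exists a merged sequence w₁, …, w_{p+q}, obtained by interleaving the two sequences (i.e., there are strictly increasing injections φ : {1,…,p} → {1,…,p+q} and ψ : {1,…,q} → {1,…,p+q} with disjoint images covering {1,…,p+q}, and w_{φ(i)} = u_i, w_{ψ(j)} = v_j), such that w_k − w_{k+1} > t₀ for all 1 ≤ k ≤ p+q−1. -/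
private lemma smono_val_zero {m n : ℕ} {f : Fin m → Fin n} (hf : StrictMono f)
    (i : Fin m) (h : (f i).val = 0) : i.val = 0 := by
  by_contra hne
  have h0 : (0:ℕ) < m := lt_of_le_of_lt (Nat.zero_le _) i.isLt
  have hlt : f ⟨0, h0⟩ < f i := hf (by rw [Fin.lt_def]; simpa using Nat.pos_of_ne_zero hne)
  rw [Fin.lt_def, h] at hlt
  omega

theorem merge_aux (t₀ : ℝ) (ht : t₀ < 0) :
    ∀ (n p q : ℕ), p + q = n → ∀ (u : Fin p → ℝ) (v : Fin q → ℝ),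
      (∀ (i : ℕ) (h : i + 1 < p), u ⟨i, Nat.lt_of_succ_lt h⟩ - u ⟨i + 1, h⟩ > t₀) →
      (∀ (i : ℕ) (h : i + 1 < q), v ⟨i, Nat.lt_of_succ_lt h⟩ - v ⟨i + 1, h⟩ > t₀) →
      ∃ (w : Fin (p + q) → ℝ) (φ : Fin p → Fin (p + q)) (ψ : Fin q → Fin (p + q)),
        StrictMono φ ∧ StrictMono ψ ∧
        Disjoint (Set.range φ) (Set.range ψ) ∧
        Set.range φ ∪ Set.range ψ = Set.univ ∧
        (∀ i, w (φ i) = u i) ∧ (∀ j, w (ψ j) = v j) ∧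
        ∀ (k : ℕ) (h : k + 1 < p + q),
          w ⟨k, Nat.lt_of_succ_lt h⟩ - w ⟨k + 1, h⟩ > t₀ := by
  intro n
  induction n using Nat.strong_induction_on with
  | _ n IH =>
  intro p q hn u v hu hv
  match p, q with
  | 0, q =>
    refine ⟨fun k => v ⟨k.val, by omega⟩, Fin.elim0, fun j => ⟨j.val, by omega⟩,
      fun a => a.elim0, ?_, ?_, ?_, fun i => i.elim0, ?_, ?_⟩
    · intro a b hab
      exact hab
    · simp [Set.disjoint_left]
    · ext x
      simp only [Set.mem_union, Set.mem_range, Set.mem_univ, iff_true]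
      right
      exact ⟨⟨x.val, by omega⟩, Fin.ext rfl⟩
    · intro j; rfl
    · intro k h
      exact hv k (by omega)
  | p+1, 0 =>
    refine ⟨u, id, Fin.elim0, strictMono_id, fun a => a.elim0, ?_, ?_,
      fun i => rfl, fun j => j.elim0, ?_⟩
    · simp [Set.disjoint_right]
    · simp [Set.range_id]
    · intro k h
      exact hu k h
  | p'+1, q'+1 =>
    by_cases hc : v 0 ≤ u 0
    · -- take u 0 first
      obtain ⟨w', φ', ψ', hφm, hψm, hdisj, huniv, hwu, hwv, hchain⟩ :=
        IH (p' + (q'+1)) (by omega) p' (q'+1) rfl (fun i => u i.succ) v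
          (fun i h => hu (i+1) (by omega)) hv
      have e : p' + (q'+1) + 1 = p' + 1 + (q'+1) := by omega
      have hcc : ∀ y : Fin (p' + (q'+1) + 1), Fin.cast e.symm (Fin.cast e y) = y :=
        fun y => rfl
      refine ⟨fun k => (Fin.cons (u 0) w' : Fin (p' + (q'+1) + 1) → ℝ) (Fin.cast e.symm k),
        (Fin.cons (Fin.cast e 0) (fun i' => Fin.cast e (φ' i').succ) :
          Fin (p'+1) → Fin (p'+1+(q'+1))),
        fun j => Fin.cast e (ψ' j).succ, ?_, ?_, ?_, ?_, ?_, ?_, ?_⟩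
      · -- StrictMono φ
        intro a b hab
        induction a using Fin.cases with
        | zero =>
          induction b using Fin.cases with
          | zero => exact absurd hab (lt_irrefl _)
          | succ b' =>
            simp only [Fin.cons_zero, Fin.cons_succ, Fin.lt_def, Fin.coe_cast,
              Fin.val_succ, Fin.val_zero]
            omega
        | succ a' =>
          induction b using Fin.cases with
          | zero =>
            exact absurd hab (by rw [Fin.lt_def]; simp only [Fin.val_succ, Fin.val_zero]; omega)
          | succ b' =>
            have h1 : a' < b' := by
              rw [Fin.lt_def] at hab ⊢; simp only [Fin.val_succ] at hab; omega
            have h2 := hφm h1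
            rw [Fin.lt_def] at h2
            simp only [Fin.cons_succ, Fin.lt_def, Fin.coe_cast, Fin.val_succ]
            omega
      · -- StrictMono ψ
        intro a b hab
        have h2 := hψm hab
        rw [Fin.lt_def] at h2 ⊢
        simp only [Fin.coe_cast, Fin.val_succ]
        omega
      · -- Disjoint
        rw [Set.disjoint_left]
        rintro x ⟨i, rfl⟩ ⟨j, hj⟩
        have hjv := congrArg Fin.val hj
        simp only [Fin.coe_cast, Fin.val_succ] at hjv
        induction i using Fin.cases with
        | zero =>
          simp only [Fin.cons_zero, Fin.coe_cast, Fin.val_zero] at hjv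
          omega
        | succ i' =>
          simp only [Fin.cons_succ, Fin.coe_cast, Fin.val_succ] at hjv
          have heq : ψ' j = φ' i' := Fin.ext (by omega)
          exact Set.disjoint_left.mp hdisj ⟨i', rfl⟩ ⟨j, heq⟩
      · -- union = univ
        ext x
        simp only [Set.mem_union, Set.mem_range, Set.mem_univ, iff_true]
        rcases Nat.eq_zero_or_pos x.val with hx0 | hx0
        · left
          refine ⟨0, Fin.ext ?_⟩
          simp only [Fin.cons_zero, Fin.coe_cast, Fin.val_zero]
          omega
        · obtain ⟨m, hm⟩ : ∃ m, x.val = m + 1 := ⟨x.val - 1, by omega⟩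
          have hm' : m < p' + (q'+1) := by omega
          have : (⟨m, hm'⟩ : Fin (p' + (q'+1))) ∈ Set.range φ' ∪ Set.range ψ' := by
            rw [huniv]; trivial
          rcases this with ⟨i, hi⟩ | ⟨j, hj⟩
          · left
            refine ⟨i.succ, Fin.ext ?_⟩
            have hiv := congrArg Fin.val hi
            simp only [Fin.cons_succ, Fin.coe_cast, Fin.val_succ]
            simp only at hiv
            omega
          · right
            refine ⟨j, Fin.ext ?_⟩
            have hjv := congrArg Fin.val hj
            simp only [Fin.coe_cast, Fin.val_succ]
            simp only at hjv
            omega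
      · -- w (φ i) = u i
        intro i
        induction i using Fin.cases with
        | zero => simp only [Fin.cons_zero, hcc]
        | succ i' =>
          simp only [Fin.cons_succ, hcc]
          exact hwu i'
      · -- w (ψ j) = v j
        intro j
        simp only [hcc, Fin.cons_succ]
        exact hwv j
      · -- chain
        intro k h
        match k with
        | 0 =>
          have h1 : (0:ℕ) < p' + (q'+1) := by omega
          have hmem : (⟨0, h1⟩ : Fin (p' + (q'+1))) ∈ Set.range φ' ∪ Set.range ψ' := by
            rw [huniv]; trivial
          have hw0 : (Fin.cons (u 0) w' : Fin (p' + (q'+1) + 1) → ℝ)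
              (Fin.cast e.symm ⟨0, Nat.lt_of_succ_lt h⟩) = u 0 := by
            rw [show Fin.cast e.symm (⟨0, Nat.lt_of_succ_lt h⟩ : Fin (p'+1+(q'+1)))
                = 0 from rfl, Fin.cons_zero]
          have hw1 : (Fin.cons (u 0) w' : Fin (p' + (q'+1) + 1) → ℝ)
              (Fin.cast e.symm ⟨1, h⟩) = w' ⟨0, h1⟩ := by
            rw [show Fin.cast e.symm (⟨1, h⟩ : Fin (p'+1+(q'+1)))
                = Fin.succ ⟨0, h1⟩ from rfl, Fin.cons_succ]
          simp only
          rw [hw0, hw1]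
          rcases hmem with ⟨i, hi⟩ | ⟨j, hj⟩
          · have hi0 : i.val = 0 := smono_val_zero hφm i (by rw [hi])
            have hww : w' ⟨0, h1⟩ = u i.succ := by rw [← hi]; exact hwu i
            rw [hww]
            have his : i.succ = (⟨1, by omega⟩ : Fin (p'+1)) :=
              Fin.ext (by simp [Fin.val_succ, hi0])
            rw [his]
            exact hu 0 (by omega)
          · have hj0 : j.val = 0 := smono_val_zero hψm j (by rw [hj])
            have hww : w' ⟨0, h1⟩ = v j := by rw [← hj]; exact hwv j
            rw [hww]
            have hjz : j = 0 := Fin.ext (by simp [hj0])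
            rw [hjz]
            linarith
        | k'+1 =>
          have h2 : k' + 1 < p' + (q'+1) := by omega
          have hwk : ∀ (m : ℕ) (hm : m + 1 < p'+1+(q'+1)) (hm' : m < p' + (q'+1)),
              (Fin.cons (u 0) w' : Fin (p' + (q'+1) + 1) → ℝ)
                (Fin.cast e.symm ⟨m+1, hm⟩) = w' ⟨m, hm'⟩ := by
            intro m hm hm'
            rw [show Fin.cast e.symm (⟨m+1, hm⟩ : Fin (p'+1+(q'+1)))
                = Fin.succ ⟨m, hm'⟩ from rfl, Fin.cons_succ]
          simp only
          rw [hwk k' (by omega) (by omega), hwk (k'+1) h h2]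
          exact hchain k' h2
    · -- take v 0 first
      push_neg at hc
      obtain ⟨w', φ', ψ', hφm, hψm, hdisj, huniv, hwu, hwv, hchain⟩ :=
        IH ((p'+1) + q') (by omega) (p'+1) q' rfl u (fun j => v j.succ)
          hu (fun i h => hv (i+1) (by omega))
      have e : (p'+1) + q' + 1 = p' + 1 + (q'+1) := by omega
      have hcc : ∀ y : Fin ((p'+1) + q' + 1), Fin.cast e.symm (Fin.cast e y) = y :=
        fun y => rfl
      refine ⟨fun k => (Fin.cons (v 0) w' : Fin ((p'+1) + q' + 1) → ℝ) (Fin.cast e.symm k),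
        fun i => Fin.cast e (φ' i).succ,
        (Fin.cons (Fin.cast e 0) (fun j' => Fin.cast e (ψ' j').succ) :
          Fin (q'+1) → Fin (p'+1+(q'+1))),
        ?_, ?_, ?_, ?_, ?_, ?_, ?_⟩
      · intro a b hab
        have h2 := hφm hab
        rw [Fin.lt_def] at h2 ⊢
        simp only [Fin.coe_cast, Fin.val_succ]
        omega
      · intro a b hab
        induction a using Fin.cases with
        | zero =>
          induction b using Fin.cases with
          | zero => exact absurd hab (lt_irrefl _)
          | succ b' =>
            simp only [Fin.cons_zero, Fin.cons_succ, Fin.lt_def, Fin.coe_cast,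
              Fin.val_succ, Fin.val_zero]
            omega
        | succ a' =>
          induction b using Fin.cases with
          | zero =>
            exact absurd hab (by rw [Fin.lt_def]; simp only [Fin.val_succ, Fin.val_zero]; omega)
          | succ b' =>
            have h1 : a' < b' := by
              rw [Fin.lt_def] at hab ⊢; simp only [Fin.val_succ] at hab; omega
            have h2 := hψm h1
            rw [Fin.lt_def] at h2
            simp only [Fin.cons_succ, Fin.lt_def, Fin.coe_cast, Fin.val_succ]
            omega
      · rw [Set.disjoint_left]
        rintro x ⟨i, rfl⟩ ⟨j, hj⟩
        have hjv := congrArg Fin.val hj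
        induction j using Fin.cases with
        | zero =>
          simp only [Fin.cons_zero, Fin.coe_cast, Fin.val_zero, Fin.val_succ] at hjv
          omega
        | succ j' =>
          simp only [Fin.cons_succ, Fin.coe_cast, Fin.val_succ] at hjv
          have heq : ψ' j' = φ' i := Fin.ext (by omega)
          exact Set.disjoint_left.mp hdisj ⟨i, rfl⟩ ⟨j', heq⟩
      · ext x
        simp only [Set.mem_union, Set.mem_range, Set.mem_univ, iff_true]
        rcases Nat.eq_zero_or_pos x.val with hx0 | hx0
        · right
          refine ⟨0, Fin.ext ?_⟩
          simp only [Fin.cons_zero, Fin.coe_cast, Fin.val_zero]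
          omega
        · obtain ⟨m, hm⟩ : ∃ m, x.val = m + 1 := ⟨x.val - 1, by omega⟩
          have hm' : m < (p'+1) + q' := by omega
          have : (⟨m, hm'⟩ : Fin ((p'+1) + q')) ∈ Set.range φ' ∪ Set.range ψ' := by
            rw [huniv]; trivial
          rcases this with ⟨i, hi⟩ | ⟨j, hj⟩
          · left
            refine ⟨i, Fin.ext ?_⟩
            have hiv := congrArg Fin.val hi
            simp only [Fin.coe_cast, Fin.val_succ]
            simp only at hiv
            omega
          · right
            refine ⟨j.succ, Fin.ext ?_⟩
            have hjv := congrArg Fin.val hj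
            simp only [Fin.cons_succ, Fin.coe_cast, Fin.val_succ]
            simp only at hjv
            omega
      · intro i
        simp only [hcc, Fin.cons_succ]
        exact hwu i
      · intro j
        induction j using Fin.cases with
        | zero => simp only [Fin.cons_zero, hcc]
        | succ j' =>
          simp only [Fin.cons_succ, hcc]
          exact hwv j'
      · intro k h
        match k with
        | 0 =>
          have h1 : (0:ℕ) < (p'+1) + q' := by omega
          have hmem : (⟨0, h1⟩ : Fin ((p'+1) + q')) ∈ Set.range φ' ∪ Set.range ψ' := by
            rw [huniv]; trivial
          have hw0 : (Fin.cons (v 0) w' : Fin ((p'+1) + q' + 1) → ℝ)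
              (Fin.cast e.symm ⟨0, Nat.lt_of_succ_lt h⟩) = v 0 := by
            rw [show Fin.cast e.symm (⟨0, Nat.lt_of_succ_lt h⟩ : Fin (p'+1+(q'+1)))
                = 0 from rfl, Fin.cons_zero]
          have hw1 : (Fin.cons (v 0) w' : Fin ((p'+1) + q' + 1) → ℝ)
              (Fin.cast e.symm ⟨1, h⟩) = w' ⟨0, h1⟩ := by
            rw [show Fin.cast e.symm (⟨1, h⟩ : Fin (p'+1+(q'+1)))
                = Fin.succ ⟨0, h1⟩ from rfl, Fin.cons_succ]
          simp only
          rw [hw0, hw1]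
          rcases hmem with ⟨i, hi⟩ | ⟨j, hj⟩
          · have hi0 : i.val = 0 := smono_val_zero hφm i (by rw [hi])
            have hww : w' ⟨0, h1⟩ = u i := by rw [← hi]; exact hwu i
            rw [hww]
            have hiz : i = 0 := Fin.ext (by simp [hi0])
            rw [hiz]
            linarith
          · have hj0 : j.val = 0 := smono_val_zero hψm j (by rw [hj])
            have hww : w' ⟨0, h1⟩ = v j.succ := by rw [← hj]; exact hwv j
            rw [hww]
            have hjs : j.succ = (⟨1, by omega⟩ : Fin (q'+1)) :=
              Fin.ext (by simp [Fin.val_succ, hj0])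
            rw [hjs]
            exact hv 0 (by omega)
        | k'+1 =>
          have h2 : k' + 1 < (p'+1) + q' := by omega
          have hwk : ∀ (m : ℕ) (hm : m + 1 < p'+1+(q'+1)) (hm' : m < (p'+1) + q'),
              (Fin.cons (v 0) w' : Fin ((p'+1) + q' + 1) → ℝ)
                (Fin.cast e.symm ⟨m+1, hm⟩) = w' ⟨m, hm'⟩ := by
            intro m hm hm'
            rw [show Fin.cast e.symm (⟨m+1, hm⟩ : Fin (p'+1+(q'+1)))
                = Fin.succ ⟨m, hm'⟩ from rfl, Fin.cons_succ]
          simp only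
          rw [hwk k' (by omega) (by omega), hwk (k'+1) h h2]
          exact hchain k' h2

theorem siegel_merge (t₀ : ℝ) (ht : t₀ < 0) (p q : ℕ)
    (u : Fin p → ℝ) (v : Fin q → ℝ)
    (hu : ∀ (i : ℕ) (h : i + 1 < p), u ⟨i, Nat.lt_of_succ_lt h⟩ - u ⟨i + 1, h⟩ > t₀)
    (hv : ∀ (i : ℕ) (h : i + 1 < q), v ⟨i, Nat.lt_of_succ_lt h⟩ - v ⟨i + 1, h⟩ > t₀) :
    ∃ (w : Fin (p + q) → ℝ) (φ : Fin p → Fin (p + q)) (ψ : Fin q → Fin (p + q)),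
      StrictMono φ ∧ StrictMono ψ ∧
      Disjoint (Set.range φ) (Set.range ψ) ∧
      Set.range φ ∪ Set.range ψ = Set.univ ∧
      (∀ i, w (φ i) = u i) ∧ (∀ j, w (ψ j) = v j) ∧
      ∀ (k : ℕ) (h : k + 1 < p + q),
        w ⟨k, Nat.lt_of_succ_lt h⟩ - w ⟨k + 1, h⟩ > t₀ := by
  exact merge_aux t₀ ht (p + q) p q rfl u v hu hv
end

section
/- Let K be an algebraically closed field, p ≤ q, A a p×q matrix and B a q×p matrix over K. If the p×p matrix A·B has p distinct nonzero eigenvalues, then the (p+q)×(p+q) block matrix X = [[0, A],[B, 0]] is diagonalizable over K. -/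
open Polynomial Matrix

section aux

variable {K : Type*} [Field K]

private lemma pow_shift {m n : Type*} [Fintype m] [Fintype n] [DecidableEq m] [DecidableEq n]
    (M : Matrix m n K) (N : Matrix n m K) (k : ℕ) :
    M * (N * M) ^ k = (M * N) ^ k * M := by
  induction k with
  | zero => simp
  | succ t ih =>
    rw [pow_succ, pow_succ, ← Matrix.mul_assoc, ih, Matrix.mul_assoc, Matrix.mul_assoc,
      Matrix.mul_assoc]

private lemma aeval_shift {m n : Type*} [Fintype m] [Fintype n] [DecidableEq m] [DecidableEq n]
    (M : Matrix m n K) (N : Matrix n m K) (g : K[X]) :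
    M * Polynomial.aeval (N * M) g = Polynomial.aeval (M * N) g * M := by
  induction g using Polynomial.induction_on' with
  | add f g hf hg => rw [map_add, map_add, Matrix.mul_add, Matrix.add_mul, hf, hg]
  | monomial k a =>
    rw [Polynomial.aeval_monomial, Polynomial.aeval_monomial, ← Algebra.smul_def, ← Algebra.smul_def, Matrix.mul_smul, Matrix.smul_mul, pow_shift]

private lemma fromBlocks_pow {m n : Type*} [Fintype m] [Fintype n] [DecidableEq m] [DecidableEq n]
    (C : Matrix m m K) (D : Matrix n n K) (k : ℕ) :
    (Matrix.fromBlocks C 0 0 D) ^ k = Matrix.fromBlocks (C ^ k) 0 0 (D ^ k) := by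
  induction k with
  | zero => simp [pow_zero, Matrix.fromBlocks_one]
  | succ t ih => simp [pow_succ, ih, Matrix.fromBlocks_multiply]

private lemma aeval_fromBlocks {m n : Type*} [Fintype m] [Fintype n] [DecidableEq m]
    [DecidableEq n] (C : Matrix m m K) (D : Matrix n n K) (g : K[X]) :
    Polynomial.aeval (Matrix.fromBlocks C 0 0 D) g =
      Matrix.fromBlocks (Polynomial.aeval C g) 0 0 (Polynomial.aeval D g) := by
  induction g using Polynomial.induction_on' with
  | add f g hf hg => rw [map_add, map_add, map_add, hf, hg, Matrix.fromBlocks_add]; simp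
  | monomial k a =>
    rw [Polynomial.aeval_monomial, Polynomial.aeval_monomial, Polynomial.aeval_monomial,
      ← Algebra.smul_def, ← Algebra.smul_def, ← Algebra.smul_def, fromBlocks_pow]
    simp [Matrix.fromBlocks_smul]

/-- If the eigenspaces of `mulVecLin X` span, then `X` is diagonalizable. -/
private lemma diag_of_eigenspaces {n : Type*} [Fintype n] [DecidableEq n]
    (X : Matrix n n K)
    (htop : ⨆ μ : K, Module.End.eigenspace (Matrix.mulVecLin X : Module.End K (n → K)) μ = ⊤) :
    ∃ P : Matrix n n K, IsUnit P ∧ (P⁻¹ * X * P).IsDiag := by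
  classical
  set f : Module.End K (n → K) := X.mulVecLin with hf
  have hind := Module.End.eigenspaces_iSupIndep f
  have hint : DirectSum.IsInternal (fun μ : K => f.eigenspace μ) :=
    DirectSum.isInternal_submodule_of_iSupIndep_of_iSup_eq_top hind htop
  let bμ : ∀ μ : K, Module.Basis (Fin (Module.finrank K (f.eigenspace μ))) K (f.eigenspace μ) :=
    fun μ => Module.finBasis K _
  let b0 := hint.collectedBasis bμ
  haveI : Fintype (Σ μ : K, Fin (Module.finrank K (f.eigenspace μ))) :=
    FiniteDimensional.fintypeBasisIndex b0
  have hcard : Fintype.card (Σ μ : K, Fin (Module.finrank K (f.eigenspace μ)))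
      = Fintype.card n := by
    rw [← Module.finrank_eq_card_basis b0, Module.finrank_fintype_fun_eq_card]
  let e := Fintype.equivOfCardEq hcard
  let b := b0.reindex e
  let d : n → K := fun i => (e.symm i).1
  have hb : ∀ i, X.mulVec (b i) = d i • b i := by
    intro i
    have hmem : (b0 (e.symm i) : n → K) ∈ f.eigenspace ((e.symm i).1) :=
      hint.collectedBasis_mem bμ (e.symm i)
    have := Module.End.mem_eigenspace_iff.mp hmem
    simpa [b, Module.Basis.reindex_apply, d, hf, Matrix.mulVecLin_apply] using this
  let P : Matrix n n K := (Pi.basisFun K n).toMatrix b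
  letI := (Pi.basisFun K n).invertibleToMatrix b
  have hP : IsUnit P := isUnit_of_invertible P
  have hPa : ∀ i j, P i j = b j i := by
    intro i j
    simp [P, Module.Basis.toMatrix_apply]
  have hXP : X * P = P * Matrix.diagonal d := by
    ext i j
    rw [Matrix.mul_apply, Matrix.mul_diagonal]
    have := congrFun (hb j) i
    simp only [Matrix.mulVec, dotProduct, Pi.smul_apply, smul_eq_mul] at this
    simp only [hPa]
    rw [this, mul_comm]
  refine ⟨P, hP, ?_⟩
  have : P⁻¹ * X * P = Matrix.diagonal d := by
    rw [Matrix.mul_assoc, hXP, ← Matrix.mul_assoc,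
      Matrix.nonsing_inv_mul P (((Matrix.isUnit_iff_isUnit_det P).mp hP)), one_mul]
  rw [this]
  exact Matrix.isDiag_diagonal d

end aux

theorem block_diagonalizable_of_distinct_eigenvalues (K : Type*) [Field K] [IsAlgClosed K]
    (h2 : (2 : K) ≠ 0) (p q : ℕ) (hpq : p ≤ q)
    (A : Matrix (Fin p) (Fin q) K) (B : Matrix (Fin q) (Fin p) K)
    (μ : Fin p → K) (hinj : Function.Injective μ) (h0 : ∀ i, μ i ≠ 0)
    (hcp : (A * B).charpoly = ∏ i, (Polynomial.X - Polynomial.C (μ i))) :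
    ∃ P : Matrix (Fin p ⊕ Fin q) (Fin p ⊕ Fin q) K, IsUnit P ∧
      (P⁻¹ * (Matrix.fromBlocks 0 A B 0) * P).IsDiag := by
  classical
  set Xm : Matrix (Fin p ⊕ Fin q) (Fin p ⊕ Fin q) K := Matrix.fromBlocks 0 A B 0 with hXm
  -- square roots of the eigenvalues
  have hsqrt : ∀ i : Fin p, ∃ ν : K, ν ^ 2 = μ i := fun i =>
    IsAlgClosed.exists_pow_nat_eq (μ i) (n := 2) (by norm_num)
  choose ν hν using hsqrt
  have hν0 : ∀ i, ν i ≠ 0 := by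
    intro i hzero
    exact h0 i (by rw [← hν i, hzero]; ring)
  -- the roots of the annihilating polynomial
  let r : Option (Fin p × Bool) → K := fun t =>
    match t with
    | none => 0
    | some (i, true) => ν i
    | some (i, false) => - ν i
  have sqv : ∀ (i : Fin p) (b : Bool), r (some (i, b)) ^ 2 = μ i := by
    intro i b
    cases b
    · show (- ν i) ^ 2 = μ i
      rw [← hν i]; ring
    · exact hν i
  have hrinj : Function.Injective r := by
    intro s t hst
    rcases s with _ | ⟨i, bi⟩ <;> rcases t with _ | ⟨j, bj⟩
    · rfl
    · have hj : μ j = 0 := by rw [← sqv j bj, ← hst]; show (0:K)^2 = 0; ring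
      exact absurd hj (h0 j)
    · have hi : μ i = 0 := by rw [← sqv i bi, hst]; show (0:K)^2 = 0; ring
      exact absurd hi (h0 i)
    · have hij : i = j := hinj (by rw [← sqv i bi, ← sqv j bj, hst])
      subst hij
      have hbb : bi = bj := by
        by_contra hne
        have h2ν : (2 : K) * ν i = 0 := by
          rcases bi <;> rcases bj <;> first
            | exact absurd rfl hne
            | (replace hst : - ν i = ν i := hst; linear_combination - hst)
            | (replace hst : ν i = - ν i := hst; linear_combination hst)
        rcases mul_eq_zero.mp h2ν with h | h
        · exact h2 h
        · exact hν0 i h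
      rw [hbb]
  -- the annihilating polynomial
  let m : K[X] := ∏ t : Option (Fin p × Bool), (Polynomial.X - Polynomial.C (r t))
  have hsq : Squarefree m :=
    (Polynomial.separable_prod_X_sub_C_iff.mpr hrinj).squarefree
  -- rewrite m as X * ∏ (X² - μᵢ)
  have hm : m = Polynomial.X * ∏ i : Fin p,
      (Polynomial.X ^ 2 - Polynomial.C (μ i)) := by
    have h1 : m = (Polynomial.X - Polynomial.C (r none)) *
        ∏ t : Fin p × Bool, (Polynomial.X - Polynomial.C (r (some t))) :=
      Fintype.prod_option _
    rw [h1]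
    congr 1
    · show Polynomial.X - Polynomial.C 0 = Polynomial.X
      simp
    · rw [Fintype.prod_prod_type]
      refine Finset.prod_congr rfl fun i _ => ?_
      rw [Fintype.prod_bool]
      show (Polynomial.X - Polynomial.C (ν i)) * (Polynomial.X - Polynomial.C (- ν i)) = _
      rw [← hν i, Polynomial.C_neg, sub_neg_eq_add, map_pow]
      ring
  -- evaluate m at the matrix Xm
  have hXsq : Xm * Xm = Matrix.fromBlocks (A * B) 0 0 (B * A) := by
    simp [hXm, Matrix.fromBlocks_multiply]
  set g : K[X] := ∏ i : Fin p, (Polynomial.X - Polynomial.C (μ i)) with hg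
  have hgBA : Polynomial.aeval (Xm ^ 2) g =
      Matrix.fromBlocks 0 0 0 (Polynomial.aeval (B * A) g) := by
    rw [pow_two, hXsq, aeval_fromBlocks, ← hcp, Matrix.aeval_self_charpoly]
  have hcomp : (∏ i : Fin p, (Polynomial.X ^ 2 - Polynomial.C (μ i)))
      = g.comp (Polynomial.X ^ 2) := by
    rw [hg, Polynomial.prod_comp]
    refine Finset.prod_congr rfl fun i _ => ?_
    simp [Polynomial.sub_comp]
  have hann : Polynomial.aeval Xm m = 0 := by
    rw [hm, _root_.map_mul, Polynomial.aeval_X, hcomp, Polynomial.aeval_comp]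
    have hX2 : Polynomial.aeval Xm (Polynomial.X ^ 2 : K[X]) = Xm ^ 2 := by
      rw [map_pow, Polynomial.aeval_X]
    rw [hX2, hgBA, hXm, Matrix.fromBlocks_multiply]
    rw [aeval_shift A B g, ← hcp, Matrix.aeval_self_charpoly, Matrix.zero_mul]
    simp
  -- transfer to the endomorphism and conclude via semisimplicity
  have hfeq : (Matrix.toLinAlgEquiv' Xm : (Fin p ⊕ Fin q → K) →ₗ[K] (Fin p ⊕ Fin q → K))
      = Xm.mulVecLin := by
    ext v
    simp [Matrix.toLinAlgEquiv'_apply, Matrix.mulVecLin_apply]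
  have hann' : Polynomial.aeval (Xm.mulVecLin : Module.End K (Fin p ⊕ Fin q → K)) m = 0 := by
    rw [← hfeq]
    have := Polynomial.aeval_algHom_apply (Matrix.toLinAlgEquiv' :
      Matrix (Fin p ⊕ Fin q) (Fin p ⊕ Fin q) K ≃ₐ[K] _).toAlgHom Xm m
    exact this.trans (by rw [hann, map_zero])
  have hss : Module.End.IsSemisimple (Xm.mulVecLin : Module.End K (Fin p ⊕ Fin q → K)) :=
    Module.End.isSemisimple_of_squarefree_aeval_eq_zero hsq hann'
  have htop := Module.End.iSup_maxGenEigenspace_eq_top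
    (Xm.mulVecLin : Module.End K (Fin p ⊕ Fin q → K))
  simp_rw [hss.isFinitelySemisimple.maxGenEigenspace_eq_eigenspace] at htop
  exact diag_of_eigenspaces Xm htop
end
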